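/- Let (U, W, B) be a linear system over ℂ with 2 ≤ Module.rank ℂ U. Then sl_{U,W} := ι(ker T) is a Lie ideal of the Mackey Lie algebra gl^M_{U,W} which is simple as a Lie algebra, and it is the unique simple ideal: every Lie ideal of gl^M_{U,W} which is simple as a Lie algebra equals sl_{U,W}. -/

import Mathlib

open TensorProduct

variable {U W : Type*} [AddCommGroup U] [Module ℂ U] [AddCommGroup W] [Module ℂ W]

attribute [local instance 100] LieRing.ofAssociativeRing

/-- The linear map `ι : U ⊗ W → End ℂ U` determined by `ι(u ⊗ w)(x) = B x w • u`. -/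
noncomputable def iotaMap (B : U →ₗ[ℂ] W →ₗ[ℂ] ℂ) :
    U ⊗[ℂ] W →ₗ[ℂ] Module.End ℂ U :=
  (dualTensorHom ℂ U U).comp ((TensorProduct.map B.flip LinearMap.id).comp
    (TensorProduct.comm ℂ U W).toLinearMap)

/-- The defining property of `iotaMap`. -/
theorem iotaMap_apply (B : U →ₗ[ℂ] W →ₗ[ℂ] ℂ) (u x : U) (w : W) :
    iotaMap B (u ⊗ₜ w) x = B x w • u := by
  simp [iotaMap]

/-- The linear map `T : U ⊗ W → ℂ` determined by `T(u ⊗ w) = B u w`. -/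
noncomputable def Tmap (B : U →ₗ[ℂ] W →ₗ[ℂ] ℂ) : U ⊗[ℂ] W →ₗ[ℂ] ℂ :=
  TensorProduct.lift B

theorem Tmap_apply (B : U →ₗ[ℂ] W →ₗ[ℂ] ℂ) (u : U) (w : W) :
    Tmap B (u ⊗ₜ w) = B u w := rfl

/-- The Mackey Lie algebra `gl^M_{U,W}`: all `φ ∈ End ℂ U` whose dual map preserves
`W̃ = range (B.flip) ⊆ U*`. -/
noncomputable def glMackey (B : U →ₗ[ℂ] W →ₗ[ℂ] ℂ) :
    LieSubalgebra ℂ (Module.End ℂ U) where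
  carrier := {φ | ∀ ξ ∈ LinearMap.range B.flip, φ.dualMap ξ ∈ LinearMap.range B.flip}
  add_mem' := by
    intro a b ha hb ξ hξ
    have h : (a + b).dualMap ξ = a.dualMap ξ + b.dualMap ξ := by ext x; simp
    rw [h]
    exact Submodule.add_mem _ (ha ξ hξ) (hb ξ hξ)
  zero_mem' := by
    intro ξ hξ
    have h : (0 : Module.End ℂ U).dualMap ξ = 0 := by ext x; simp
    rw [h]; exact Submodule.zero_mem _
  smul_mem' := by
    intro c a ha ξ hξ
    have h : (c • a).dualMap ξ = c • a.dualMap ξ := by ext x; simp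
    rw [h]
    exact Submodule.smul_mem _ _ (ha ξ hξ)
  lie_mem' := by
    intro a b ha hb ξ hξ
    have h : (⁅a, b⁆ : Module.End ℂ U).dualMap ξ
        = b.dualMap (a.dualMap ξ) - a.dualMap (b.dualMap ξ) := by
      ext x; simp [Module.End.lie_apply]
    rw [h]
    exact Submodule.sub_mem _ (hb _ (ha ξ hξ)) (ha _ (hb ξ hξ))

theorem glM_bracket_mem (B : U →ₗ[ℂ] W →ₗ[ℂ] ℂ) (φ : Module.End ℂ U)
    (hφ : ∀ ξ ∈ LinearMap.range B.flip, φ.dualMap ξ ∈ LinearMap.range B.flip)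
    (t : U ⊗[ℂ] W) :
    ⁅φ, iotaMap B t⁆ ∈ Submodule.map (iotaMap B) (LinearMap.ker (Tmap B)) := by
  induction t using TensorProduct.induction_on with
  | zero => simp
  | tmul u' w' =>
    obtain ⟨w'', hw''⟩ := hφ (B.flip w') ⟨w', rfl⟩
    have key : ∀ x : U, B x w'' = B (φ x) w' := by
      intro x
      have := congrArg (fun ξ : Module.Dual ℂ U => ξ x) hw''
      simpa using this
    refine ⟨φ u' ⊗ₜ w' - u' ⊗ₜ w'', ?_, ?_⟩
    · simp only [SetLike.mem_coe, LinearMap.mem_ker, map_sub, Tmap_apply]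
      rw [key u']
      ring
    · ext x
      rw [Ring.lie_def]
      simp only [map_sub, LinearMap.sub_apply, Module.End.mul_apply, iotaMap_apply,
        map_smul, smul_eq_mul]
      rw [key x]
  | add a b ha hb =>
    rw [map_add, lie_add]
    exact Submodule.add_mem _ ha hb

/-- `sl_{U,W} = ι(ker T)` regarded as a Lie ideal of the Mackey Lie algebra
`gl^M_{U,W}`. -/
noncomputable def slIdeal (B : U →ₗ[ℂ] W →ₗ[ℂ] ℂ) : LieIdeal ℂ ↥(glMackey B) where
  carrier := {φ | (φ : Module.End ℂ U) ∈ Submodule.map (iotaMap B) (LinearMap.ker (Tmap B))}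
  add_mem' := by
    intro a b ha hb
    simp only [Set.mem_setOf_eq] at *
    exact Submodule.add_mem _ ha hb
  zero_mem' := by
    simp only [Set.mem_setOf_eq]
    exact Submodule.zero_mem _
  smul_mem' := by
    intro c a ha
    simp only [Set.mem_setOf_eq] at *
    exact Submodule.smul_mem _ _ ha
  lie_mem := by
    intro x m hm
    simp only [Set.mem_setOf_eq] at *
    obtain ⟨t, -, ht⟩ := hm
    have hco : ((⁅x, m⁆ : ↥(glMackey B)) : Module.End ℂ U)
        = ⁅(x : Module.End ℂ U), (m : Module.End ℂ U)⁆ := rfl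
    rw [hco, ← ht]
    exact glM_bracket_mem B (x : Module.End ℂ U) x.2 t

section Aux

variable (B : U →ₗ[ℂ] W →ₗ[ℂ] ℂ)

/-- Abbreviation for the rank-one operator `ι(u ⊗ w)`. -/
noncomputable def ee (u : U) (w : W) : Module.End ℂ U := iotaMap B (u ⊗ₜ w)

theorem ee_apply (u x : U) (w : W) : ee B u w x = B x w • u := iotaMap_apply B u x w

theorem ee_smul_left (c : ℂ) (u : U) (w : W) : ee B (c • u) w = c • ee B u w := by
  ext x; simp only [ee_apply, LinearMap.smul_apply]; rw [smul_comm]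

theorem ee_smul_right (c : ℂ) (u : U) (w : W) : ee B u (c • w) = c • ee B u w := by
  ext x; simp [ee_apply, smul_smul, mul_comm]

theorem ee_add_left (u u' : U) (w : W) : ee B (u + u') w = ee B u w + ee B u' w := by
  ext x; simp [ee_apply]

theorem ee_add_right (u : U) (w w' : W) : ee B u (w + w') = ee B u w + ee B u w' := by
  ext x; simp [ee_apply, add_smul]

theorem ee_sub_right (u : U) (w w' : W) : ee B u (w - w') = ee B u w - ee B u w' := by
  ext x; simp [ee_apply, sub_smul]

theorem ee_zero_left (w : W) : ee B 0 w = 0 := by ext x; simp [ee_apply]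

theorem ee_zero_right (u : U) : ee B u 0 = 0 := by ext x; simp [ee_apply]

theorem lie_ee_ee (a u : U) (b w : W) :
    ⁅ee B a b, ee B u w⁆ = B u b • ee B a w - B a w • ee B u b := by
  ext x
  simp only [Ring.lie_def, LinearMap.sub_apply, Module.End.mul_apply, ee_apply, map_smul,
    LinearMap.smul_apply, smul_smul]
  module

theorem ee_mem_glM (u : U) (w : W) : ee B u w ∈ glMackey B := by
  rintro ξ ⟨w', rfl⟩
  refine ⟨B u w' • w, ?_⟩
  ext x
  simp [ee_apply, mul_comm]

theorem ee_mem_S {u : U} {w : W} (h : B u w = 0) :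
    ee B u w ∈ Submodule.map (iotaMap B) (LinearMap.ker (Tmap B)) :=
  ⟨u ⊗ₜ w, by simp [LinearMap.mem_ker, Tmap_apply, h], rfl⟩

theorem adad {u : U} {w : W} (h : B u w = 0) (φ : Module.End ℂ U) :
    ⁅ee B u w, ⁅ee B u w, φ⁆⁆ = (-(2:ℂ) * B (φ u) w) • ee B u w := by
  ext x
  simp only [Ring.lie_def, LinearMap.sub_apply, Module.End.mul_apply, ee_apply, map_smul,
    map_sub, smul_eq_mul, LinearMap.smul_apply, h, mul_zero, zero_mul, zero_sub, sub_zero,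
    zero_smul, smul_zero, neg_mul, smul_smul, map_zero]
  module

end Aux
section Sep

variable {M N : Type*} [AddCommGroup M] [Module ℂ M] [AddCommGroup N] [Module ℂ N]

theorem sep1 (B' : M →ₗ[ℂ] N →ₗ[ℂ] ℂ) (hB : ∀ m : M, (∀ n : N, B' m n = 0) → m = 0)
    {u v : M} (hu : u ≠ 0) (h : ∀ n : N, B' u n = 0 → B' v n = 0) : ∃ c : ℂ, v = c • u := by
  have h1 : ¬∀ n : N, B' u n = 0 := fun hn => hu (hB u hn)
  push_neg at h1
  obtain ⟨n₀, hn₀⟩ := h1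
  refine ⟨B' v n₀ / B' u n₀, ?_⟩
  have hz : v - (B' v n₀ / B' u n₀) • u = 0 := by
    apply hB
    intro n
    have h0 : B' u (n - (B' u n / B' u n₀) • n₀) = 0 := by
      simp only [map_sub, map_smul, smul_eq_mul]
      field_simp
      ring
    have h2 := h _ h0
    simp only [map_sub, map_smul, smul_eq_mul, LinearMap.sub_apply, LinearMap.smul_apply,
      sub_eq_zero] at h2 ⊢
    rw [h2]
    field_simp
  have := sub_eq_zero.mp hz
  exact this

theorem sep2 (B' : M →ₗ[ℂ] N →ₗ[ℂ] ℂ) (hB : ∀ m : M, (∀ n : N, B' m n = 0) → m = 0)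
    {u v : M} (hu : u ≠ 0) (hv : ∀ c : ℂ, v ≠ c • u) :
    ∃ n : N, B' u n = 0 ∧ B' v n = 1 := by
  have h1 : ¬∀ n : N, B' u n = 0 → B' v n = 0 := by
    intro h
    obtain ⟨c, hc⟩ := sep1 B' hB hu h
    exact hv c hc
  push_neg at h1
  obtain ⟨n₀, h0, hn₀⟩ := h1
  refine ⟨(B' v n₀)⁻¹ • n₀, ?_, ?_⟩
  · simp [h0]
  · simp only [map_smul, smul_eq_mul]
    field_simp

theorem sep_scalar (B : U →ₗ[ℂ] W →ₗ[ℂ] ℂ)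
    (hB1 : ∀ u : U, (∀ w : W, B u w = 0) → u = 0)
    (hU : ∃ u₀ : U, u₀ ≠ (0 : U))
    (φ : Module.End ℂ U) (h : ∀ (u : U) (w : W), B u w = 0 → B (φ u) w = 0) :
    ∃ c : ℂ, φ = c • (1 : Module.End ℂ U) := by
  have key : ∀ u : U, ∃ c : ℂ, φ u = c • u := by
    intro u
    by_cases hu : u = 0
    · exact ⟨0, by simp [hu]⟩
    · exact sep1 B hB1 hu (h u)
  obtain ⟨u₀, hu₀⟩ := hU
  obtain ⟨c₀, hc₀⟩ := key u₀
  refine ⟨c₀, ?_⟩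
  ext u
  have hone : ∀ v : U, (c₀ • (1 : Module.End ℂ U)) v = c₀ • v := fun v => rfl
  rw [hone]
  by_cases hdep : ∃ k : ℂ, u = k • u₀
  · obtain ⟨k, rfl⟩ := hdep
    rw [map_smul, hc₀, smul_smul, smul_smul, mul_comm]
  · obtain ⟨c, hc⟩ := key u
    obtain ⟨c', hc'⟩ := key (u + u₀)
    rw [map_add, hc, hc₀, smul_add] at hc'
    have hrel : (c - c') • u = (c' - c₀) • u₀ := by
      rw [sub_smul, sub_smul, sub_eq_sub_iff_add_eq_add]
      exact hc'.trans (add_comm _ _)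
    by_cases hcc : c = c'
    · have : (c' - c₀) • u₀ = 0 := by rw [← hrel, hcc, sub_self, zero_smul]
      have hcc0 : c' = c₀ := by
        by_contra hne
        exact hu₀ (by
          have := smul_eq_zero.mp this
          rcases this with h1 | h1
          · exact absurd (sub_eq_zero.mp h1) hne
          · exact h1)
      rw [hc, hcc, hcc0]
    · exfalso
      apply hdep
      refine ⟨(c' - c₀) / (c - c'), ?_⟩
      have h2 : u = (c - c')⁻¹ • ((c' - c₀) • u₀) := by
        rw [← hrel, smul_smul, inv_mul_cancel₀ (sub_ne_zero.mpr hcc), one_smul]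
      rw [h2, smul_smul, div_eq_inv_mul]
end Sep
section Span0

variable (B : U →ₗ[ℂ] W →ₗ[ℂ] ℂ)

/-- The span of the square-zero rank-one operators. -/
noncomputable def sl0Span : Submodule ℂ (Module.End ℂ U) :=
  Submodule.span ℂ {f | ∃ (u : U) (w : W), B u w = 0 ∧ f = ee B u w}

theorem ee_mem_span0 {u : U} {w : W} (h : B u w = 0) : ee B u w ∈ sl0Span B :=
  Submodule.subset_span ⟨u, w, h, rfl⟩

theorem diff_mem_span0_aux {u u' : U} {w w' : W} (h0 : B u w = B u' w') (hne : B u' w ≠ 0) :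
    ee B u w - ee B u' w' ∈ sl0Span B := by
  set t : ℂ := -(B u w) / (B u' w) with ht
  have key : ee B u w - ee B u' w' = ee B (u + t • u') w - ee B u' (w' + t • w) := by
    rw [ee_add_left, ee_smul_left, ee_add_right, ee_smul_right]
    abel
  rw [key]
  refine sub_mem (ee_mem_span0 B ?_) (ee_mem_span0 B ?_)
  · simp only [map_add, map_smul, LinearMap.add_apply, LinearMap.smul_apply, smul_eq_mul, ht]
    field_simp
    ring
  · simp only [map_add, map_smul, smul_eq_mul, ht]
    field_simp
    linear_combination -h0

theorem diff_mem_span0 {u u' : U} {w w' : W} (h0 : B u w = B u' w') :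
    ee B u w - ee B u' w' ∈ sl0Span B := by
  by_cases h1 : B u' w ≠ 0
  · exact diff_mem_span0_aux B h0 h1
  by_cases h2 : B u w' ≠ 0
  · have := diff_mem_span0_aux B h0.symm h2
    have h3 : ee B u w - ee B u' w' = -(ee B u' w' - ee B u w) := by abel
    rw [h3]
    exact neg_mem this
  push_neg at h1 h2
  by_cases h4 : B u w = 0
  · exact sub_mem (ee_mem_span0 B h4) (ee_mem_span0 B (h0 ▸ h4))
  · have key : ee B u w - ee B u' w' =
        (ee B u (w + w') - ee B u' w') + -(ee B u w') := by
      rw [ee_add_right]; abel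
    rw [key]
    refine add_mem (diff_mem_span0_aux B ?_ ?_) (neg_mem (ee_mem_span0 B h2))
    · rw [map_add, h2, add_zero, h0]
    · rw [map_add, h1, zero_add, ← h0]
      exact h4

theorem S_le_span0 (u₀ : U) (w₀ : W) (h1 : B u₀ w₀ = 1) :
    Submodule.map (iotaMap B) (LinearMap.ker (Tmap B)) ≤ sl0Span B := by
  have key : ∀ t : U ⊗[ℂ] W, iotaMap B t - Tmap B t • ee B u₀ w₀ ∈ sl0Span B := by
    intro t
    induction t using TensorProduct.induction_on with
    | zero => simp
    | tmul u w =>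
      have h2 : Tmap B (u ⊗ₜ w) • ee B u₀ w₀ = ee B ((B u w) • u₀) w₀ := by
        rw [Tmap_apply, ee_smul_left]
      rw [h2]
      refine diff_mem_span0 B ?_
      rw [map_smul, LinearMap.smul_apply, smul_eq_mul, h1, mul_one]
    | add a b ha hb =>
      have h3 : iotaMap B (a + b) - Tmap B (a + b) • ee B u₀ w₀ =
          (iotaMap B a - Tmap B a • ee B u₀ w₀) + (iotaMap B b - Tmap B b • ee B u₀ w₀) := by
        rw [map_add, map_add, add_smul]; abel
      rw [h3]
      exact add_mem ha hb
  rintro f ⟨t, ht, rfl⟩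
  have h4 := key t
  rw [LinearMap.mem_ker.mp ht, zero_smul, sub_zero] at h4
  exact h4

end Span0
section Gen

variable (B : U →ₗ[ℂ] W →ₗ[ℂ] ℂ)

theorem stepA (hB1 : ∀ u : U, (∀ w : W, B u w = 0) → u = 0)
    {C : Submodule ℂ (Module.End ℂ U)}
    (hC : ∀ (a : U) (b : W), B a b = 0 → ∀ f ∈ C, ⁅ee B a b, f⁆ ∈ C)
    {u₀ : U} {w₀ : W} (hu₀ : u₀ ≠ 0) (h00 : B u₀ w₀ = 0) (hC0 : ee B u₀ w₀ ∈ C)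
    {u : U} (hu : B u w₀ = 0) : ee B u w₀ ∈ C := by
  by_cases hk : ∃ k : ℂ, u = k • u₀
  · obtain ⟨k, rfl⟩ := hk
    rw [ee_smul_left]
    exact C.smul_mem _ hC0
  · have hune : u ≠ 0 := fun h => hk ⟨0, by rw [h, zero_smul]⟩
    have hindep : ∀ c : ℂ, u₀ ≠ c • u := by
      intro c hc
      rcases eq_or_ne c 0 with rfl | hc0
      · exact hu₀ (by rw [hc, zero_smul])
      · exact hk ⟨c⁻¹, by rw [hc, smul_smul, inv_mul_cancel₀ hc0, one_smul]⟩
    obtain ⟨b, hb0, hb1⟩ := sep2 B hB1 hune hindep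
    have hmem := hC u b hb0 _ hC0
    rw [lie_ee_ee, hb1, one_smul, hu, zero_smul, sub_zero] at hmem
    exact hmem

theorem stepB (hB2 : ∀ w : W, (∀ u : U, B u w = 0) → w = 0)
    {C : Submodule ℂ (Module.End ℂ U)}
    (hC : ∀ (a : U) (b : W), B a b = 0 → ∀ f ∈ C, ⁅ee B a b, f⁆ ∈ C)
    {u₀ : U} {w₀ : W} (hw₀ : w₀ ≠ 0) (h00 : B u₀ w₀ = 0) (hC0 : ee B u₀ w₀ ∈ C)
    {w : W} (hw : B u₀ w = 0) : ee B u₀ w ∈ C := by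
  by_cases hk : ∃ k : ℂ, w = k • w₀
  · obtain ⟨k, rfl⟩ := hk
    rw [ee_smul_right]
    exact C.smul_mem _ hC0
  · have hwne : w ≠ 0 := fun h => hk ⟨0, by rw [h, zero_smul]⟩
    have hindep : ∀ c : ℂ, w₀ ≠ c • w := by
      intro c hc
      rcases eq_or_ne c 0 with rfl | hc0
      · exact hw₀ (by rw [hc, zero_smul])
      · exact hk ⟨c⁻¹, by rw [hc, smul_smul, inv_mul_cancel₀ hc0, one_smul]⟩
    obtain ⟨a, ha0, ha1⟩ := sep2 B.flip (fun n hn => hB2 n hn) hwne hindep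
    -- ha0 : B a w = 0, ha1 : B a w₀ = 1
    have hmem := hC a w ha0 _ hC0
    rw [lie_ee_ee, hw, zero_smul, zero_sub] at hmem
    have h2 : B a w₀ • ee B u₀ w = ee B u₀ w := by
      rw [show B a w₀ = B.flip w₀ a from rfl, ha1, one_smul]
    rw [h2] at hmem
    simpa using neg_mem hmem

theorem genAll (hB1 : ∀ u : U, (∀ w : W, B u w = 0) → u = 0)
    (hB2 : ∀ w : W, (∀ u : U, B u w = 0) → w = 0)
    {C : Submodule ℂ (Module.End ℂ U)}
    (hC : ∀ (a : U) (b : W), B a b = 0 → ∀ f ∈ C, ⁅ee B a b, f⁆ ∈ C)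
    {u₀ : U} {w₀ : W} (hu₀ : u₀ ≠ 0) (hw₀ : w₀ ≠ 0) (h00 : B u₀ w₀ = 0)
    (hC0 : ee B u₀ w₀ ∈ C) :
    ∀ (u : U) (w : W), B u w = 0 → ee B u w ∈ C := by
  intro u w huw
  rcases eq_or_ne u 0 with rfl | hu
  · rw [ee_zero_left]; exact C.zero_mem
  rcases eq_or_ne w 0 with rfl | hw
  · rw [ee_zero_right]; exact C.zero_mem
  by_cases h1 : B u w₀ = 0
  · have hA : ee B u w₀ ∈ C := stepA B hB1 hC hu₀ h00 hC0 h1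
    exact stepB B hB2 hC hw₀ h1 hA huw
  by_cases h2 : B u₀ w = 0
  · have hBm : ee B u₀ w ∈ C := stepB B hB2 hC hw₀ h00 hC0 h2
    exact stepA B hB1 hC hu₀ h2 hBm huw
  · -- the "sl₂" case
    set c : ℂ := B u w₀ with hc
    set d : ℂ := B u₀ w with hd
    set u₁ : U := c⁻¹ • u with hu₁
    set w₁ : W := d⁻¹ • w with hw₁
    have h10 : B u₁ w₀ = 1 := by
      rw [hu₁, map_smul, LinearMap.smul_apply, smul_eq_mul, ← hc, inv_mul_cancel₀ h1]
    have h01 : B u₀ w₁ = 1 := by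
      rw [hw₁, map_smul, smul_eq_mul, ← hd, inv_mul_cancel₀ h2]
    have h11 : B u₁ w₁ = 0 := by
      simp only [hu₁, hw₁, map_smul, LinearMap.smul_apply, smul_eq_mul, huw, mul_zero]
    have hG : B (u₀ + u₁) (w₀ - w₁) = 0 := by
      rw [map_add, LinearMap.add_apply, map_sub, map_sub, h00, h01, h10, h11]
      ring
    have hexp : ee B (u₀ + u₁) (w₀ - w₁)
        = ee B u₀ w₀ - ee B u₀ w₁ + ee B u₁ w₀ - ee B u₁ w₁ := by
      rw [ee_add_left, ee_sub_right, ee_sub_right]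
      abel
    have hX : ⁅ee B (u₀ + u₁) (w₀ - w₁), ee B u₀ w₀⁆ ∈ C := hC _ _ hG _ hC0
    have hY : ⁅ee B (u₀ + u₁) (w₀ - w₁), ⁅ee B (u₀ + u₁) (w₀ - w₁), ee B u₀ w₀⁆⁆ ∈ C :=
      hC _ _ hG _ hX
    have key : ee B u₁ w₁ = -ee B u₀ w₀ - ⁅ee B (u₀ + u₁) (w₀ - w₁), ee B u₀ w₀⁆
        - (2:ℂ)⁻¹ • ⁅ee B (u₀ + u₁) (w₀ - w₁), ⁅ee B (u₀ + u₁) (w₀ - w₁), ee B u₀ w₀⁆⁆ := by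
      simp only [hexp, sub_lie, add_lie, lie_sub, lie_add, lie_smul, smul_lie, lie_neg,
        neg_lie, lie_ee_ee, h00, h01, h10, h11, zero_smul, one_smul, smul_sub, smul_add,
        smul_smul, smul_zero, sub_zero, zero_sub, smul_neg, neg_neg, neg_sub]
      module
    have hF : ee B u₁ w₁ ∈ C := by
      rw [key]
      exact C.sub_mem (C.sub_mem (C.neg_mem hC0) hX) (C.smul_mem _ hY)
    have hfin : ee B u w = (c * d) • ee B u₁ w₁ := by
      have hcu : u = c • u₁ := by rw [hu₁, smul_inv_smul₀ h1]
      have hdw : w = d • w₁ := by rw [hw₁, smul_inv_smul₀ h2]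
      calc ee B u w = ee B (c • u₁) (d • w₁) := by rw [← hcu, ← hdw]
        _ = (c * d) • ee B u₁ w₁ := by rw [ee_smul_left, ee_smul_right, smul_smul]
    rw [hfin]
    exact C.smul_mem _ hF

theorem crux (hB1 : ∀ u : U, (∀ w : W, B u w = 0) → u = 0)
    (hB2 : ∀ w : W, (∀ u : U, B u w = 0) → w = 0)
    {C : Submodule ℂ (Module.End ℂ U)}
    (hC : ∀ (a : U) (b : W), B a b = 0 → ∀ f ∈ C, ⁅ee B a b, f⁆ ∈ C)
    {φ : Module.End ℂ U} (hφC : φ ∈ C)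
    {u : U} {w : W} (h0 : B u w = 0) (hne : B (φ u) w ≠ 0) :
    Submodule.map (iotaMap B) (LinearMap.ker (Tmap B)) ≤ C := by
  have hu : u ≠ 0 := by
    rintro rfl
    rw [map_zero, map_zero, LinearMap.zero_apply] at hne
    exact hne rfl
  have hw : w ≠ 0 := by
    rintro rfl
    rw [map_zero] at hne
    exact hne rfl
  have hq : ee B u w ∈ C := by
    have h1 : ⁅ee B u w, φ⁆ ∈ C := hC u w h0 φ hφC
    have h2 : ⁅ee B u w, ⁅ee B u w, φ⁆⁆ ∈ C := hC u w h0 _ h1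
    rw [adad B h0 φ] at h2
    have h3 := C.smul_mem (-(2:ℂ) * B (φ u) w)⁻¹ h2
    rw [smul_smul, inv_mul_cancel₀ (by simpa using hne), one_smul] at h3
    exact h3
  -- find a normalized pair for S_le_span0
  have h1 : ¬∀ w' : W, B u w' = 0 := fun hn => hu (hB1 u hn)
  push_neg at h1
  obtain ⟨v₀, hv₀⟩ := h1
  have hpair : B u ((B u v₀)⁻¹ • v₀) = 1 := by
    rw [map_smul, smul_eq_mul, inv_mul_cancel₀ hv₀]
  refine le_trans (S_le_span0 B u _ hpair) ?_
  rw [sl0Span, Submodule.span_le]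
  rintro f ⟨a, b, hab, rfl⟩
  exact genAll B hB1 hB2 hC hu hw h0 hq a b hab

end Gen
section Trace

variable (B : U →ₗ[ℂ] W →ₗ[ℂ] ℂ)

theorem exists_pair (hrank : 2 ≤ Module.rank ℂ U) :
    ∃ u₁ u₀ : U, u₁ ≠ 0 ∧ ∀ c : ℂ, u₀ ≠ c • u₁ := by
  have h1 : ¬Module.rank ℂ U ≤ 1 := by
    intro h
    have := le_trans hrank h
    norm_num at this
  rw [rank_le_one_iff] at h1
  push_neg at h1
  obtain ⟨v, hv⟩ := h1 0
  have hvne : v ≠ 0 := fun h => hv 0 (by rw [h, zero_smul])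
  obtain ⟨u₀, hu₀⟩ := h1 v
  exact ⟨v, u₀, hvne, fun c h => hu₀ c h.symm⟩

theorem trace_iota (t : U ⊗[ℂ] W) [Module.Finite ℂ U] :
    LinearMap.trace ℂ U (iotaMap B t) = Tmap B t := by
  induction t using TensorProduct.induction_on with
  | zero => simp
  | tmul u w =>
    have h : iotaMap B (u ⊗ₜ w) = dualTensorHom ℂ U U (B.flip w ⊗ₜ u) := by
      simp [iotaMap]
    rw [h, LinearMap.trace_eq_contract_apply, contractLeft_apply, Tmap_apply]
    rfl
  | add a b ha hb => rw [map_add, map_add, map_add, ha, hb]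

theorem one_not_mem_S (hrank : 2 ≤ Module.rank ℂ U) :
    (1 : Module.End ℂ U) ∉ Submodule.map (iotaMap B) (LinearMap.ker (Tmap B)) := by
  classical
  rintro ⟨t, ht, h1⟩
  obtain ⟨s, hs⟩ := TensorProduct.exists_finset t
  have hspan : ∀ x : U, x ∈ Submodule.span ℂ (↑(s.image Prod.fst) : Set U) := by
    intro x
    have hx : iotaMap B t x = x := by rw [h1]; rfl
    rw [← hx, hs, map_sum, LinearMap.sum_apply]
    refine Submodule.sum_mem _ fun p hp => ?_
    rw [iotaMap_apply]
    exact Submodule.smul_mem _ _ (Submodule.subset_span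
      (by exact_mod_cast Finset.mem_image_of_mem Prod.fst hp))
  haveI : Module.Finite ℂ U :=
    ⟨⟨s.image Prod.fst, by rw [Submodule.eq_top_iff']; exact hspan⟩⟩
  have htr := trace_iota B t
  rw [h1, LinearMap.mem_ker.mp ht] at htr
  have hone : LinearMap.trace ℂ U 1 = (Module.finrank ℂ U : ℂ) := LinearMap.trace_one ℂ U
  rw [hone] at htr
  have hfr : Module.finrank ℂ U = 0 := by exact_mod_cast htr
  have h2 : (2 : Cardinal) ≤ (Module.finrank ℂ U : Cardinal) := by
    rw [Module.finrank_eq_rank ℂ U]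
    exact hrank
  rw [hfr] at h2
  norm_num at h2

end Trace
section Main

variable (B : U →ₗ[ℂ] W →ₗ[ℂ] ℂ)

/-- The inclusion of the Mackey Lie algebra into `End ℂ U` as a linear map. -/
noncomputable def glIncl : ↥(glMackey B) →ₗ[ℂ] Module.End ℂ U where
  toFun x := (x : Module.End ℂ U)
  map_add' _ _ := rfl
  map_smul' _ _ := rfl

/-- The inclusion of `sl` into `End ℂ U` as a linear map. -/
noncomputable def slIncl : ↥(slIdeal B) →ₗ[ℂ] Module.End ℂ U where
  toFun x := ((x : ↥(glMackey B)) : Module.End ℂ U)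
  map_add' _ _ := rfl
  map_smul' _ _ := rfl

/-- `ee B u w` with `B u w = 0` as an element of `sl`. -/
noncomputable def eeSL (u : U) (w : W) (h : B u w = 0) : ↥(slIdeal B) :=
  ⟨⟨ee B u w, ee_mem_glM B u w⟩, ee_mem_S B h⟩

theorem part1 (hB1 : ∀ u : U, (∀ w : W, B u w = 0) → u = 0)
    (hB2 : ∀ w : W, (∀ u : U, B u w = 0) → w = 0)
    (hrank : 2 ≤ Module.rank ℂ U) :
    LieAlgebra.IsSimple ℂ ↥(slIdeal B) := by
  obtain ⟨u₁, u₀p, hu₁, hind⟩ := exists_pair hrank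
  constructor
  · -- every ideal is ⊥ or ⊤
    intro J
    rcases eq_or_ne J ⊥ with hbot | hbot
    · left; exact hbot
    right
    have hex : ∃ x, x ∈ J ∧ x ≠ (0 : ↥(slIdeal B)) := by
      by_contra hcon
      push_neg at hcon
      exact hbot ((LieSubmodule.eq_bot_iff _).mpr hcon)
    obtain ⟨x, hxJ, hx0⟩ := hex
    set C : Submodule ℂ (Module.End ℂ U) :=
      Submodule.map (slIncl B) (LieSubmodule.toSubmodule J) with hCdef
    have hC : ∀ (a : U) (b : W), B a b = 0 → ∀ f ∈ C, ⁅ee B a b, f⁆ ∈ C := by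
      intro a b hab f hf
      obtain ⟨y, hy, rfl⟩ := hf
      exact ⟨⁅eeSL B a b hab, y⁆, J.lie_mem hy, rfl⟩
    have hφC : slIncl B x ∈ C := ⟨x, hxJ, rfl⟩
    have hφne : slIncl B x ≠ 0 := fun h => hx0 (Subtype.ext (Subtype.ext h))
    have hS : ∃ (u : U) (w : W), B u w = 0 ∧ B ((slIncl B x) u) w ≠ 0 := by
      by_contra hcon
      push_neg at hcon
      obtain ⟨c, hc⟩ := sep_scalar B hB1 ⟨u₁, hu₁⟩ _ fun u w h => (hcon u w h)
      have hc0 : c ≠ 0 := by rintro rfl; rw [zero_smul] at hc; exact hφne hc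
      have hmem : slIncl B x ∈ Submodule.map (iotaMap B) (LinearMap.ker (Tmap B)) := x.2
      rw [hc] at hmem
      have h1m := Submodule.smul_mem _ c⁻¹ hmem
      rw [smul_smul, inv_mul_cancel₀ hc0, one_smul] at h1m
      exact one_not_mem_S B hrank h1m
    obtain ⟨u, w, h0, hne⟩ := hS
    have hle := crux B hB1 hB2 hC hφC h0 hne
    refine eq_top_iff.mpr ?_
    intro y _
    have hyS : slIncl B y ∈ C := hle y.2
    obtain ⟨j, hjJ, hj⟩ := hyS
    have hjy : j = y := Subtype.ext (Subtype.ext hj)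
    rw [← hjy]
    exact hjJ
  · -- non-abelian
    intro habs
    have hu₀ : u₀p ≠ 0 := fun h => hind 0 (by rw [h, zero_smul])
    have hind' : ∀ c : ℂ, u₁ ≠ c • u₀p := by
      intro c hc
      rcases eq_or_ne c 0 with rfl | hc0
      · exact hu₁ (by rw [hc, zero_smul])
      · exact hind c⁻¹ (by rw [hc, smul_smul, inv_mul_cancel₀ hc0, one_smul])
    obtain ⟨w, hw0, hw1⟩ := sep2 B hB1 hu₁ hind
    obtain ⟨w', hw'0, hw'1⟩ := sep2 B hB1 hu₀ hind'
    have h := habs.trivial (eeSL B u₁ w hw0) (eeSL B u₀p w' hw'0)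
    have h2 : ⁅ee B u₁ w, ee B u₀p w'⁆ = 0 := by
      have : slIncl B ⁅eeSL B u₁ w hw0, eeSL B u₀p w' hw'0⁆
          = ⁅ee B u₁ w, ee B u₀p w'⁆ := rfl
      rw [← this, h, map_zero]
    rw [lie_ee_ee, hw1, hw'1, one_smul, one_smul] at h2
    have h3 := congrArg (fun f : Module.End ℂ U => f u₀p) h2
    simp only [LinearMap.sub_apply, ee_apply, hw'0, hw1, zero_smul, one_smul,
      LinearMap.zero_apply, zero_sub, neg_eq_zero] at h3
    exact hu₀ h3

theorem part2 (hB1 : ∀ u : U, (∀ w : W, B u w = 0) → u = 0)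
    (hB2 : ∀ w : W, (∀ u : U, B u w = 0) → w = 0)
    (hrank : 2 ≤ Module.rank ℂ U)
    (I : LieIdeal ℂ ↥(glMackey B)) (hI : LieAlgebra.IsSimple ℂ ↥I) :
    I = slIdeal B := by
  obtain ⟨u₁, u₀p, hu₁, hind⟩ := exists_pair hrank
  set C : Submodule ℂ (Module.End ℂ U) :=
    Submodule.map (glIncl B) (LieSubmodule.toSubmodule I) with hCdef
  have hC : ∀ (a : U) (b : W), B a b = 0 → ∀ f ∈ C, ⁅ee B a b, f⁆ ∈ C := by
    intro a b _ f hf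
    obtain ⟨y, hy, rfl⟩ := hf
    exact ⟨⁅(⟨ee B a b, ee_mem_glM B a b⟩ : ↥(glMackey B)), y⁆, I.lie_mem hy, rfl⟩
  have hns : ∃ x : ↥(glMackey B), x ∈ I ∧
      ∀ c : ℂ, (x : Module.End ℂ U) ≠ c • (1 : Module.End ℂ U) := by
    by_contra hcon
    push_neg at hcon
    apply hI.non_abelian
    constructor
    intro a b
    obtain ⟨ca, hca⟩ := hcon ↑a a.2
    obtain ⟨cb, hcb⟩ := hcon ↑b b.2
    apply Subtype.ext
    apply Subtype.ext
    show ⁅((a : ↥(glMackey B)) : Module.End ℂ U), ((b : ↥(glMackey B)) : Module.End ℂ U)⁆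
        = (0 : Module.End ℂ U)
    rw [hca, hcb, smul_lie, lie_smul, lie_self, smul_zero, smul_zero]
  obtain ⟨x, hxI, hxns⟩ := hns
  have hsep : ∃ (u : U) (w : W), B u w = 0 ∧ B ((x : Module.End ℂ U) u) w ≠ 0 := by
    by_contra hcon
    push_neg at hcon
    obtain ⟨c, hc⟩ := sep_scalar B hB1 ⟨u₁, hu₁⟩ _ fun u w h => hcon u w h
    exact hxns c hc
  obtain ⟨u, w, h0, hne⟩ := hsep
  have hxC : (x : Module.End ℂ U) ∈ C := ⟨x, hxI, rfl⟩
  have hle := crux B hB1 hB2 hC hxC h0 hne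
  have hqC : ee B u w ∈ C := hle (ee_mem_S B h0)
  have hu : u ≠ 0 := by
    rintro rfl
    rw [map_zero, map_zero, LinearMap.zero_apply] at hne
    exact hne rfl
  have hqne : ee B u w ≠ 0 := by
    intro hq
    have h3 := congrArg (fun f : Module.End ℂ U => f ((x : Module.End ℂ U) u)) hq
    simp only [ee_apply, LinearMap.zero_apply] at h3
    rcases smul_eq_zero.mp h3 with h4 | h4
    · exact hne h4
    · exact hu h4
  -- the ideal of `I` cut out by `sl`
  let J : LieIdeal ℂ ↥I :=
    { carrier := {z : ↥I | ((z : ↥(glMackey B)) : Module.End ℂ U)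
        ∈ Submodule.map (iotaMap B) (LinearMap.ker (Tmap B))},
      add_mem' := by
        intro a b ha hb
        simp only [Set.mem_setOf_eq] at *
        exact Submodule.add_mem _ ha hb
      zero_mem' := by
        simp only [Set.mem_setOf_eq]
        exact Submodule.zero_mem _
      smul_mem' := by
        intro c a ha
        simp only [Set.mem_setOf_eq] at *
        exact Submodule.smul_mem _ _ ha
      lie_mem := by
        intro z m hm
        simp only [Set.mem_setOf_eq] at *
        obtain ⟨t, -, ht⟩ := hm
        have hco : (((⁅z, m⁆ : ↥I) : ↥(glMackey B)) : Module.End ℂ U)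
            = ⁅(((z : ↥I) : ↥(glMackey B)) : Module.End ℂ U),
               ((m : ↥(glMackey B)) : Module.End ℂ U)⁆ := rfl
        rw [hco, ← ht]
        exact glM_bracket_mem B _ (z : ↥(glMackey B)).2 t }
  have hJ := hI.eq_bot_or_eq_top J
  have hJne : J ≠ ⊥ := by
    obtain ⟨jq, hjq, hjq2⟩ := hqC
    intro hbot
    rw [LieSubmodule.eq_bot_iff] at hbot
    have hmemJ : (⟨jq, hjq⟩ : ↥I) ∈ J := by
      show glIncl B jq ∈ Submodule.map (iotaMap B) (LinearMap.ker (Tmap B))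
      rw [hjq2]
      exact ee_mem_S B h0
    have hz := hbot _ hmemJ
    have hz2 : glIncl B jq = 0 :=
      congrArg (fun z : ↥I => ((z : ↥(glMackey B)) : Module.End ℂ U)) hz
    rw [hjq2] at hz2
    exact hqne hz2
  rcases hJ with hbot | htop
  · exact absurd hbot hJne
  have hIle : I ≤ slIdeal B := by
    intro y hy
    have hmem : (⟨y, hy⟩ : ↥I) ∈ J := by rw [htop]; exact LieSubmodule.mem_top _
    exact hmem
  have hslle : slIdeal B ≤ I := by
    intro y hy
    have hyC : (y : Module.End ℂ U) ∈ C := hle hy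
    obtain ⟨j, hj, hj2⟩ := hyC
    have hjy : j = y := Subtype.ext hj2
    rw [← hjy]
    exact hj
  exact le_antisymm hIle hslle

end Main
/-- For a linear system `(U, W, B)` with `2 ≤ dim U`: `sl_{U,W} = ι(ker T)` is a Lie
ideal of `gl^M_{U,W}`, it is simple as a Lie algebra, and it is the unique simple Lie
ideal of `gl^M_{U,W}`: every Lie ideal of `gl^M_{U,W}` which is simple as a Lie algebra
equals `sl_{U,W}`. -/
theorem stmt_10 (B : U →ₗ[ℂ] W →ₗ[ℂ] ℂ)
    (hB1 : ∀ u : U, (∀ w : W, B u w = 0) → u = 0)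
    (hB2 : ∀ w : W, (∀ u : U, B u w = 0) → w = 0)
    (hrank : 2 ≤ Module.rank ℂ U) :
    LieAlgebra.IsSimple ℂ ↑(slIdeal B) ∧
    (∀ I : LieIdeal ℂ ↑(glMackey B), LieAlgebra.IsSimple ℂ ↑I → I = slIdeal B) := by
  exact ⟨part1 B hB1 hB2 hrank, fun I hI => part2 B hB1 hB2 hrank I hI⟩
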